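/- Let ξ be a random vector in ℝ^d (a measurable map from a probability space to Euclidean ℝ^d), and let σ ≥ 0, ρ ≥ 0. Assume: (i) for every u ∈ ℝ^d, the real random variable ⟨ξ,u⟩⁶ is integrable and E[⟨ξ,u⟩⁶] = σ⁶·‖u‖⁶; (ii) for every pair of orthogonal vectors u₁, u₂ ∈ ℝ^d, the random variables ⟨u₁,ξ⟩⁵·⟨u₂,ξ⟩ and ⟨u₁,ξ⟩³·⟨u₂,ξ⟩³ are integrable with |E[⟨u₁,ξ⟩⁵·⟨u₂,ξ⟩]| ≤ ρ·‖u₁‖⁵·‖u₂‖ and |E[⟨u₁,ξ⟩³·⟨u₂,ξ⟩³]| ≤ ρ·‖u₁‖³·‖u₂‖³. Then for all w₁, w₂ ∈ ℝ^d: |E[⟨w₁,ξ⟩³·⟨w₂,ξ⟩³]| ≤ 4·σ⁶·|⟨w₁,w₂⟩|·‖w₁‖²·‖w₂‖² + 4·ρ·‖w₁‖³·‖w₂‖³. -/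

import Mathlib

open MeasureTheory
open scoped RealInnerProductSpace

set_option maxHeartbeats 1600000

/-- Cubic-cubic cross-correlation estimate for the noise vector (part of
Claim A.1 / `claim:noise`): the correlation of the cubic activations of two
neurons on pure noise is controlled by the weight overlap plus `ρ`:
`|E[⟨w₁,ξ⟩³⟨w₂,ξ⟩³]| ≤ 4σ⁶|⟨w₁,w₂⟩|‖w₁‖²‖w₂‖² + 4ρ‖w₁‖³‖w₂‖³`. -/
theorem noise_cubic_cross {Ω : Type*} [MeasurableSpace Ω]
    (μ : Measure Ω) [IsProbabilityMeasure μ] (d : ℕ)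
    (ξ : Ω → EuclideanSpace ℝ (Fin d)) (hξ : Measurable ξ)
    (σ ρ : ℝ) (hσ : 0 ≤ σ) (hρ : 0 ≤ ρ)
    (h6int : ∀ u : EuclideanSpace ℝ (Fin d),
      Integrable (fun ω => (⟪ξ ω, u⟫) ^ 6) μ)
    (h6 : ∀ u : EuclideanSpace ℝ (Fin d),
      ∫ ω, (⟪ξ ω, u⟫) ^ 6 ∂μ = σ ^ 6 * ‖u‖ ^ 6)
    (hc51int : ∀ u₁ u₂ : EuclideanSpace ℝ (Fin d), ⟪u₁, u₂⟫ = 0 →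
      Integrable (fun ω => (⟪u₁, ξ ω⟫) ^ 5 * ⟪u₂, ξ ω⟫) μ)
    (hc51 : ∀ u₁ u₂ : EuclideanSpace ℝ (Fin d), ⟪u₁, u₂⟫ = 0 →
      |∫ ω, (⟪u₁, ξ ω⟫) ^ 5 * ⟪u₂, ξ ω⟫ ∂μ| ≤ ρ * ‖u₁‖ ^ 5 * ‖u₂‖)
    (hc33int : ∀ u₁ u₂ : EuclideanSpace ℝ (Fin d), ⟪u₁, u₂⟫ = 0 →
      Integrable (fun ω => (⟪u₁, ξ ω⟫) ^ 3 * (⟪u₂, ξ ω⟫) ^ 3) μ)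
    (hc33 : ∀ u₁ u₂ : EuclideanSpace ℝ (Fin d), ⟪u₁, u₂⟫ = 0 →
      |∫ ω, (⟪u₁, ξ ω⟫) ^ 3 * (⟪u₂, ξ ω⟫) ^ 3 ∂μ| ≤ ρ * ‖u₁‖ ^ 3 * ‖u₂‖ ^ 3) :
    ∀ w₁ w₂ : EuclideanSpace ℝ (Fin d),
      |∫ ω, (⟪w₁, ξ ω⟫) ^ 3 * (⟪w₂, ξ ω⟫) ^ 3 ∂μ|
        ≤ 4 * σ ^ 6 * |⟪w₁, w₂⟫| * ‖w₁‖ ^ 2 * ‖w₂‖ ^ 2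
          + 4 * ρ * ‖w₁‖ ^ 3 * ‖w₂‖ ^ 3 := by
  intro w₁ w₂
  by_cases h1 : w₁ = 0
  · subst h1
    simp only [inner_zero_left, zero_pow (three_ne_zero), zero_mul, integral_zero, abs_zero]
    positivity
  have hn1 : (0:ℝ) < ‖w₁‖ := norm_pos_iff.mpr h1
  set c : ℝ := ⟪w₁, w₂⟫ / ‖w₁‖ ^ 2 with hc
  set v : EuclideanSpace ℝ (Fin d) := w₂ - c • w₁ with hv
  have horth : ⟪w₁, v⟫ = 0 := by
    rw [hv, inner_sub_right, real_inner_smul_right, real_inner_self_eq_norm_sq, hc]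
    field_simp
    ring
  set s : Ω → ℝ := fun ω => ⟪w₁, ξ ω⟫ with hs
  set t : Ω → ℝ := fun ω => ⟪v, ξ ω⟫ with ht
  have hw2 : w₂ = c • w₁ + v := by rw [hv]; abel
  have hdecomp : ∀ ω, (⟪w₂, ξ ω⟫:ℝ) = c * s ω + t ω := by
    intro ω
    conv_lhs => rw [hw2]
    rw [inner_add_left, real_inner_smul_left]
  have hms : Measurable s := measurable_const.inner hξ
  have hmt : Measurable t := measurable_const.inner hξ
  -- integrabilities
  have I6s : Integrable (fun ω => s ω ^ 6) μ := by
    simpa only [show ∀ ω, (⟪ξ ω, w₁⟫:ℝ) = s ω from fun ω => real_inner_comm _ _]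
      using h6int w₁
  have I6t : Integrable (fun ω => t ω ^ 6) μ := by
    simpa only [show ∀ ω, (⟪ξ ω, v⟫:ℝ) = t ω from fun ω => real_inner_comm _ _]
      using h6int v
  have A6 : ∫ ω, s ω ^ 6 ∂μ = σ ^ 6 * ‖w₁‖ ^ 6 := by
    rw [← h6 w₁]
    exact integral_congr_ae (Filter.Eventually.of_forall fun ω => by
      show (⟪w₁, ξ ω⟫:ℝ) ^ 6 = (⟪ξ ω, w₁⟫:ℝ) ^ 6
      rw [real_inner_comm])
  have T6 : ∫ ω, t ω ^ 6 ∂μ = σ ^ 6 * ‖v‖ ^ 6 := by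
    rw [← h6 v]
    exact integral_congr_ae (Filter.Eventually.of_forall fun ω => by
      show (⟪v, ξ ω⟫:ℝ) ^ 6 = (⟪ξ ω, v⟫:ℝ) ^ 6
      rw [real_inner_comm])
  have I51 : Integrable (fun ω => s ω ^ 5 * t ω) μ := hc51int w₁ v horth
  have I33 : Integrable (fun ω => s ω ^ 3 * t ω ^ 3) μ := hc33int w₁ v horth
  have I42 : Integrable (fun ω => s ω ^ 4 * t ω ^ 2) μ := by
    apply Integrable.mono' ((I6s.const_mul 2).add I6t)
      (((hms.pow_const 4).mul (hmt.pow_const 2)).aestronglyMeasurable)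
    filter_upwards with ω
    simp only [Pi.add_apply, Pi.mul_apply]
    rw [Real.norm_eq_abs, abs_of_nonneg (by positivity)]
    nlinarith [mul_nonneg (sq_nonneg (s ω ^ 2 - t ω ^ 2)) (sq_nonneg (s ω)),
      mul_nonneg (sq_nonneg (s ω ^ 2 - t ω ^ 2)) (sq_nonneg (t ω)),
      sq_nonneg (s ω ^ 2 * t ω)]
  have hS : (0:ℝ) ≤ σ ^ 6 := by positivity
  set C : ℝ := ∫ ω, s ω ^ 4 * t ω ^ 2 ∂μ with hCdef
  have hC0 : 0 ≤ C := integral_nonneg fun ω => by positivity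
  have hCbd : C ≤ σ ^ 6 * ‖w₁‖ ^ 4 * ‖v‖ ^ 2 := by
    by_cases hv0 : v = 0
    · have : C = 0 := by
        rw [hCdef]
        have : (fun ω => s ω ^ 4 * t ω ^ 2) = fun _ => (0:ℝ) := by
          funext ω; rw [ht]; simp [hv0]
        rw [this, integral_zero]
      rw [this]; positivity
    · have hnv : (0:ℝ) < ‖v‖ := norm_pos_iff.mpr hv0
      set lam : ℝ := ‖v‖ ^ 2 / ‖w₁‖ ^ 2 with hlam
      have hlampos : 0 < lam := by positivity
      have key : ∫ ω, (3 * lam ^ 2) * (s ω ^ 4 * t ω ^ 2) ∂μ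
          ≤ ∫ ω, (2 * lam ^ 3) * s ω ^ 6 + t ω ^ 6 ∂μ := by
        apply integral_mono (I42.const_mul _) ((I6s.const_mul _).add I6t)
        intro ω
        have h := mul_nonneg (mul_nonneg (sq_nonneg (lam * s ω ^ 2 - t ω ^ 2)) hlampos.le)
          (sq_nonneg (s ω))
        simp only [Pi.add_apply]
        nlinarith [mul_nonneg (sq_nonneg (lam * s ω ^ 2 - t ω ^ 2)) (sq_nonneg (t ω)), h]
      rw [integral_const_mul, integral_add (I6s.const_mul _) I6t, integral_const_mul,
        A6, T6, ← hCdef] at key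
      have h2 : lam ^ 3 * ‖w₁‖ ^ 6 = ‖v‖ ^ 6 := by
        rw [hlam]; field_simp
      have h3 : lam ^ 2 * ‖w₁‖ ^ 4 = ‖v‖ ^ 4 := by
        rw [hlam]; field_simp
      have h2' : 2 * lam ^ 3 * (σ ^ 6 * ‖w₁‖ ^ 6) = 2 * (σ ^ 6 * ‖v‖ ^ 6) := by
        rw [← h2]; ring
      have h4 : lam ^ 2 * (σ ^ 6 * ‖w₁‖ ^ 4 * ‖v‖ ^ 2) = σ ^ 6 * ‖v‖ ^ 6 := by
        rw [show σ ^ 6 * ‖v‖ ^ 6 = σ ^ 6 * ‖v‖ ^ 4 * ‖v‖ ^ 2 from by ring, ← h3]; ring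
      have h5 : lam ^ 2 * C ≤ lam ^ 2 * (σ ^ 6 * ‖w₁‖ ^ 4 * ‖v‖ ^ 2) := by linarith
      exact le_of_mul_le_mul_left h5 (by positivity)
  -- split the integral
  have hInt_eq : (fun ω => s ω ^ 3 * (⟪w₂, ξ ω⟫:ℝ) ^ 3)
      = fun ω => c ^ 3 * s ω ^ 6 + (3 * c ^ 2) * (s ω ^ 5 * t ω)
          + ((3 * c) * (s ω ^ 4 * t ω ^ 2) + s ω ^ 3 * t ω ^ 3) := by
    funext ω; rw [hdecomp ω]; ring
  have Ia1 : Integrable (fun ω => c ^ 3 * s ω ^ 6) μ := I6s.const_mul _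
  have Ia2 : Integrable (fun ω => (3 * c ^ 2) * (s ω ^ 5 * t ω)) μ := I51.const_mul _
  have Ia3 : Integrable (fun ω => (3 * c) * (s ω ^ 4 * t ω ^ 2)) μ := I42.const_mul _
  have Ia12 : Integrable (fun ω => c ^ 3 * s ω ^ 6 + (3 * c ^ 2) * (s ω ^ 5 * t ω)) μ :=
    Ia1.add Ia2
  have Ia34 : Integrable (fun ω => (3 * c) * (s ω ^ 4 * t ω ^ 2) + s ω ^ 3 * t ω ^ 3) μ :=
    Ia3.add I33
  have Jsplit : ∫ ω, s ω ^ 3 * (⟪w₂, ξ ω⟫:ℝ) ^ 3 ∂μ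
      = c ^ 3 * (σ ^ 6 * ‖w₁‖ ^ 6) + (3 * c ^ 2) * (∫ ω, s ω ^ 5 * t ω ∂μ)
        + ((3 * c) * C + ∫ ω, s ω ^ 3 * t ω ^ 3 ∂μ) := by
    rw [hInt_eq, integral_add Ia12 Ia34, integral_add Ia1 Ia2, integral_add Ia3 I33,
      integral_const_mul, integral_const_mul, integral_const_mul, A6, hCdef]
  set B : ℝ := ∫ ω, s ω ^ 5 * t ω ∂μ with hBdef
  set D : ℝ := ∫ ω, s ω ^ 3 * t ω ^ 3 ∂μ with hDdef
  have hB : |B| ≤ ρ * ‖w₁‖ ^ 5 * ‖v‖ := hc51 w₁ v horth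
  have hD : |D| ≤ ρ * ‖w₁‖ ^ 3 * ‖v‖ ^ 3 := hc33 w₁ v horth
  show |∫ ω, s ω ^ 3 * (⟪w₂, ξ ω⟫:ℝ) ^ 3 ∂μ|
      ≤ 4 * σ ^ 6 * |⟪w₁, w₂⟫| * ‖w₁‖ ^ 2 * ‖w₂‖ ^ 2 + 4 * ρ * ‖w₁‖ ^ 3 * ‖w₂‖ ^ 3
  clear_value B D C s t v c
  -- pythagoras
  have hpyth : c ^ 2 * ‖w₁‖ ^ 2 + ‖v‖ ^ 2 = ‖w₂‖ ^ 2 := by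
    have hnas := norm_add_sq_real (c • w₁) v
    rw [← hw2, real_inner_smul_left, horth, norm_smul, Real.norm_eq_abs, mul_pow,
      sq_abs] at hnas
    linarith
  have hnv2 : ‖v‖ ≤ ‖w₂‖ := by
    apply le_of_pow_le_pow_left₀ two_ne_zero (norm_nonneg w₂)
    have : 0 ≤ c ^ 2 * ‖w₁‖ ^ 2 := by positivity
    linarith
  have hcn1 : |c| * ‖w₁‖ ≤ ‖w₂‖ := by
    apply le_of_pow_le_pow_left₀ two_ne_zero (norm_nonneg w₂)
    rw [mul_pow, sq_abs]
    linarith [sq_nonneg ‖v‖]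
  have hip : |⟪w₁, w₂⟫| = |c| * ‖w₁‖ ^ 2 := by
    rw [hc, abs_div, abs_of_nonneg (by positivity : (0:ℝ) ≤ ‖w₁‖ ^ 2)]
    field_simp
  -- triangle inequality
  have htri : |∫ ω, s ω ^ 3 * (⟪w₂, ξ ω⟫:ℝ) ^ 3 ∂μ|
      ≤ |c| ^ 3 * (σ ^ 6 * ‖w₁‖ ^ 6) + 3 * c ^ 2 * |B| + (3 * |c| * C + |D|) := by
    rw [Jsplit]
    have t1 := abs_add_le (c ^ 3 * (σ ^ 6 * ‖w₁‖ ^ 6) + (3 * c ^ 2) * B) ((3 * c) * C + D)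
    have t2 := abs_add_le (c ^ 3 * (σ ^ 6 * ‖w₁‖ ^ 6)) ((3 * c ^ 2) * B)
    have t3 := abs_add_le ((3 * c) * C) D
    have r1 : |c ^ 3 * (σ ^ 6 * ‖w₁‖ ^ 6)| = |c| ^ 3 * (σ ^ 6 * ‖w₁‖ ^ 6) := by
      rw [abs_mul, abs_pow, abs_of_nonneg (by positivity : (0:ℝ) ≤ σ ^ 6 * ‖w₁‖ ^ 6)]
    have r2 : |(3 * c ^ 2) * B| = 3 * c ^ 2 * |B| := by
      rw [abs_mul, abs_of_nonneg (by positivity : (0:ℝ) ≤ 3 * c ^ 2)]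
    have r3 : |(3 * c) * C| = 3 * |c| * C := by
      rw [abs_mul, abs_mul, abs_of_nonneg (by norm_num : (0:ℝ) ≤ (3:ℝ)),
        abs_of_nonneg hC0]
    rw [r1, r2] at t2
    rw [r3] at t3
    linarith
  refine htri.trans ?_
  -- term bounds
  have hvw2 : ‖v‖ ^ 2 ≤ ‖w₂‖ ^ 2 := by
    have : 0 ≤ c ^ 2 * ‖w₁‖ ^ 2 := by positivity
    linarith
  have hccw2 : c ^ 2 * ‖w₁‖ ^ 2 ≤ ‖w₂‖ ^ 2 := by
    have : (0:ℝ) ≤ ‖v‖ ^ 2 := by positivity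
    linarith
  have hcsq : (|c| * ‖w₁‖) ^ 2 ≤ ‖w₂‖ ^ 2 := by
    rw [mul_pow, sq_abs]; exact hccw2
  have e1 : |c| ^ 3 * (σ ^ 6 * ‖w₁‖ ^ 6) ≤ σ ^ 6 * (|c| * ‖w₁‖ ^ 2) * ‖w₁‖ ^ 2 * ‖w₂‖ ^ 2 := by
    have heq : |c| ^ 3 * (σ ^ 6 * ‖w₁‖ ^ 6)
        = σ ^ 6 * (|c| * ‖w₁‖ ^ 2) * ‖w₁‖ ^ 2 * (|c| * ‖w₁‖) ^ 2 := by ring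
    rw [heq]
    exact mul_le_mul_of_nonneg_left hcsq (by positivity)
  have e2 : 3 * c ^ 2 * |B| ≤ 3 * ρ * ‖w₁‖ ^ 3 * ‖w₂‖ ^ 3 := by
    have h1 : 3 * c ^ 2 * |B| ≤ 3 * c ^ 2 * (ρ * ‖w₁‖ ^ 5 * ‖v‖) :=
      mul_le_mul_of_nonneg_left hB (by positivity)
    refine h1.trans ?_
    calc 3 * c ^ 2 * (ρ * ‖w₁‖ ^ 5 * ‖v‖)
        = 3 * ρ * ‖w₁‖ ^ 3 * ((c ^ 2 * ‖w₁‖ ^ 2) * ‖v‖) := by ring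
      _ ≤ 3 * ρ * ‖w₁‖ ^ 3 * (‖w₂‖ ^ 2 * ‖w₂‖) := by
          have hm := mul_le_mul hccw2 hnv2 (norm_nonneg v) (sq_nonneg ‖w₂‖)
          exact mul_le_mul_of_nonneg_left hm (by positivity)
      _ = 3 * ρ * ‖w₁‖ ^ 3 * ‖w₂‖ ^ 3 := by ring
  have e3 : 3 * |c| * C ≤ 3 * σ ^ 6 * (|c| * ‖w₁‖ ^ 2) * ‖w₁‖ ^ 2 * ‖w₂‖ ^ 2 := by
    have h1 : 3 * |c| * C ≤ 3 * |c| * (σ ^ 6 * ‖w₁‖ ^ 4 * ‖v‖ ^ 2) :=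
      mul_le_mul_of_nonneg_left hCbd (by positivity)
    refine h1.trans ?_
    calc 3 * |c| * (σ ^ 6 * ‖w₁‖ ^ 4 * ‖v‖ ^ 2)
        = 3 * σ ^ 6 * (|c| * ‖w₁‖ ^ 2) * ‖w₁‖ ^ 2 * ‖v‖ ^ 2 := by ring
      _ ≤ 3 * σ ^ 6 * (|c| * ‖w₁‖ ^ 2) * ‖w₁‖ ^ 2 * ‖w₂‖ ^ 2 :=
          mul_le_mul_of_nonneg_left hvw2 (by positivity)
  have e4 : |D| ≤ ρ * ‖w₁‖ ^ 3 * ‖w₂‖ ^ 3 := by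
    refine hD.trans ?_
    have h2 : ‖v‖ ^ 3 ≤ ‖w₂‖ ^ 3 := pow_le_pow_left₀ (norm_nonneg v) hnv2 3
    exact mul_le_mul_of_nonneg_left h2 (by positivity)
  rw [hip]
  linarith [e1, e2, e3, e4]
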